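/- Let Ω be a finite set of players and G ≤ S_Ω. There exists a unique G-symmetric quasi-value on Ω (namely the Shapley value) if and only if G acts supertransitively on Ω, i.e. for every subset A ⊆ Ω the setwise stabilizer G_A = {g ∈ G : g(A) = A} acts transitively on A. -/

import Mathlib

open scoped BigOperators

/-- The space of cooperative games on player set `Ω`: real-valued functions on
coalitions vanishing on the empty coalition. -/
def GameSpace (Ω : Type*) [DecidableEq Ω] : Submodule ℝ (Finset Ω → ℝ) where
  carrier := {v | v ∅ = 0}
  add_mem' := by
    intro a b ha hb
    simp only [Set.mem_setOf_eq, Pi.add_apply] at *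
    simp [ha, hb]
  zero_mem' := rfl
  smul_mem' := by
    intro c v hv
    simp only [Set.mem_setOf_eq, Pi.smul_apply] at *
    simp [hv]

/-- A (linear) game value: a linear operator from games to payoff vectors. -/
abbrev GameValue (Ω : Type*) [DecidableEq Ω] := GameSpace Ω →ₗ[ℝ] (Ω → ℝ)

/-- Player `i` is a null player of the game `v`: `v(R ∪ {i}) = v(R)` for all `R`. -/
def IsNullPlayer {Ω : Type*} [DecidableEq Ω] (i : Ω) (v : GameSpace Ω) : Prop :=
  ∀ R : Finset Ω, (v : Finset Ω → ℝ) (insert i R) = (v : Finset Ω → ℝ) R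

/-- A quasi-value: a linear game value satisfying the null-player property and
efficiency. -/
def IsQuasiValue {Ω : Type*} [Fintype Ω] [DecidableEq Ω] (φ : GameValue Ω) : Prop :=
  (∀ (v : GameSpace Ω) (i : Ω), IsNullPlayer i v → φ v i = 0) ∧
  (∀ v : GameSpace Ω, ∑ i, φ v i = (v : Finset Ω → ℝ) Finset.univ)

/-- The action of a permutation on a game: `(g • v)(R) = v(g⁻¹(R))`. -/
def permGame {Ω : Type*} [DecidableEq Ω] (g : Equiv.Perm Ω) (v : GameSpace Ω) :
    GameSpace Ω :=
  ⟨fun R => (v : Finset Ω → ℝ) (R.image (g⁻¹ : Equiv.Perm Ω)), by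
    show (v : Finset Ω → ℝ) ((∅ : Finset Ω).image (g⁻¹ : Equiv.Perm Ω)) = 0
    rw [Finset.image_empty]
    exact v.2⟩

/-- `φ` is symmetric with respect to all permutations in `G`:
`φ(g • v) = g • φ(v)`, i.e. `φ(g • v)ᵢ = φ(v)_{g⁻¹ i}` for all `g ∈ G`. -/
def IsGSym {Ω : Type*} [DecidableEq Ω] (G : Subgroup (Equiv.Perm Ω))
    (φ : GameValue Ω) : Prop :=
  ∀ g ∈ G, ∀ (v : GameSpace Ω) (i : Ω), φ (permGame g v) i = φ v (g⁻¹ i)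

/-- The unanimity game `u_R` for a nonempty coalition `R`. -/
def unanimity {Ω : Type*} [DecidableEq Ω] (R : Finset Ω) (hR : R.Nonempty) :
    GameSpace Ω :=
  ⟨fun S => if R ⊆ S then (1 : ℝ) else 0, by
    show (if R ⊆ (∅ : Finset Ω) then (1 : ℝ) else 0) = 0
    simp [Finset.subset_empty, hR.ne_empty]⟩

/-- The Shapley value. -/
noncomputable def shapley (Ω : Type*) [Fintype Ω] [DecidableEq Ω] : GameValue Ω where
  toFun v i := ∑ R ∈ (Finset.univ.erase i).powerset,
      ((R.card.factorial * (Fintype.card Ω - R.card - 1).factorial : ℝ) /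
        (Fintype.card Ω).factorial) *
        ((v : Finset Ω → ℝ) (insert i R) - (v : Finset Ω → ℝ) R)
  map_add' a b := by
    funext i
    simp only [Submodule.coe_add, Pi.add_apply]
    rw [← Finset.sum_add_distrib]
    exact Finset.sum_congr rfl fun R _ => by ring
  map_smul' c a := by
    funext i
    simp only [Submodule.coe_smul, Pi.smul_apply, RingHom.id_apply, smul_eq_mul]
    rw [Finset.mul_sum]
    exact Finset.sum_congr rfl fun R _ => by ring

/-- A permutation group `G` acts supertransitively if for every subset `A`, the
setwise stabilizer `G_A = {g ∈ G : g(A) = A}` acts transitively on `A`. -/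
def Supertransitive {Ω : Type*} [DecidableEq Ω] (G : Subgroup (Equiv.Perm Ω)) : Prop :=
  ∀ A : Finset Ω, ∀ i ∈ A, ∀ j ∈ A, ∃ g ∈ G, A.image g = A ∧ g i = j
open Finset

section Helpers
variable {Ω : Type*} [DecidableEq Ω]

lemma image_inv_image (g : Equiv.Perm Ω) (s : Finset Ω) :
    (s.image ⇑g).image ⇑g⁻¹ = s := by
  rw [Finset.image_image]
  have : ⇑g⁻¹ ∘ ⇑g = id := by funext x; simp
  rw [this, Finset.image_id]

lemma image_image_inv (g : Equiv.Perm Ω) (s : Finset Ω) :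
    (s.image ⇑g⁻¹).image ⇑g = s := by
  rw [Finset.image_image]
  have : ⇑g ∘ ⇑g⁻¹ = id := by funext x; simp
  rw [this, Finset.image_id]

lemma card_image_perm (g : Equiv.Perm Ω) (s : Finset Ω) :
    (s.image ⇑g).card = s.card :=
  Finset.card_image_of_injective s g.injective

lemma neg_one_powerset (B : Finset Ω) :
    ∑ U ∈ B.powerset, (-1 : ℝ) ^ U.card = if B = ∅ then 1 else 0 := by
  have := Finset.sum_powerset_neg_one_pow_card (x := B)
  have h2 : ((∑ m ∈ B.powerset, (-1 : ℤ) ^ m.card : ℤ) : ℝ)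
      = ∑ U ∈ B.powerset, (-1 : ℝ) ^ U.card := by push_cast; rfl
  rw [← h2, this]
  split <;> norm_num

lemma inner1 (S T : Finset Ω) (hST : S ⊆ T) :
    ∑ R ∈ T.powerset.filter (fun R => S ⊆ R), (-1 : ℝ) ^ (R.card - S.card)
      = if S = T then 1 else 0 := by
  have key : ∑ R ∈ T.powerset.filter (fun R => S ⊆ R), (-1 : ℝ) ^ (R.card - S.card)
      = ∑ U ∈ (T \ S).powerset, (-1 : ℝ) ^ U.card := by
    refine Finset.sum_nbij' (fun R => R \ S) (fun U => S ∪ U) ?_ ?_ ?_ ?_ ?_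
    · intro R hR
      simp only [mem_filter, mem_powerset] at hR
      exact mem_powerset.mpr (sdiff_subset_sdiff hR.1 le_rfl)
    · intro U hU
      simp only [mem_powerset] at hU
      refine mem_filter.mpr ⟨mem_powerset.mpr (union_subset hST ?_), subset_union_left⟩
      exact hU.trans (sdiff_subset)
    · intro R hR
      simp only [mem_filter, mem_powerset] at hR
      exact Finset.union_sdiff_of_subset hR.2
    · intro U hU
      simp only [mem_powerset] at hU
      exact Finset.union_sdiff_cancel_left
        (disjoint_of_subset_right hU (disjoint_sdiff))
    · intro R hR
      simp only [mem_filter, mem_powerset] at hR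
      rw [card_sdiff_of_subset hR.2]
  rw [key, neg_one_powerset]
  have : T \ S = ∅ ↔ S = T := by
    rw [Finset.sdiff_eq_empty_iff_subset]
    exact ⟨fun h => subset_antisymm hST h, fun h => h ▸ le_rfl⟩
  split
  · rw [if_pos (this.mp ‹_›)]
  · rw [if_neg (fun h => ‹¬ T \ S = ∅› (this.mpr h))]

lemma inner2 (A R : Finset Ω) (hAR : A ⊆ R) :
    ∑ S ∈ R.powerset.filter (fun S => A ⊆ S), (-1 : ℝ) ^ (R.card - S.card)
      = if R = A then 1 else 0 := by
  have key : ∑ S ∈ R.powerset.filter (fun S => A ⊆ S), (-1 : ℝ) ^ (R.card - S.card)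
      = ∑ V ∈ (R \ A).powerset, (-1 : ℝ) ^ V.card := by
    refine Finset.sum_nbij' (fun S => R \ S) (fun V => R \ V) ?_ ?_ ?_ ?_ ?_
    · intro S hS
      simp only [mem_filter, mem_powerset] at hS
      exact mem_powerset.mpr (sdiff_subset_sdiff le_rfl hS.2)
    · intro V hV
      simp only [mem_powerset] at hV
      refine mem_filter.mpr ⟨mem_powerset.mpr sdiff_subset, ?_⟩
      refine Finset.subset_sdiff.mpr ⟨hAR, ?_⟩
      exact (disjoint_of_subset_right hV disjoint_sdiff).symm.symm
    · intro S hS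
      simp only [mem_filter, mem_powerset] at hS
      exact Finset.sdiff_sdiff_eq_self hS.1
    · intro V hV
      simp only [mem_powerset] at hV
      exact Finset.sdiff_sdiff_eq_self (hV.trans sdiff_subset)
    · intro S hS
      simp only [mem_filter, mem_powerset] at hS
      rw [card_sdiff_of_subset hS.1]
  rw [key, neg_one_powerset]
  have : R \ A = ∅ ↔ R = A := by
    rw [Finset.sdiff_eq_empty_iff_subset]
    exact ⟨fun h => subset_antisymm h hAR, fun h => h ▸ le_rfl⟩
  split
  · rw [if_pos (this.mp ‹_›)]
  · rw [if_neg (fun h => ‹¬ R \ A = ∅› (this.mpr h))]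
end Helpers

section Mob
variable {Ω : Type*} [Fintype Ω] [DecidableEq Ω]

/-- Möbius coefficient of `v` at coalition `R`. -/
noncomputable def mob (R : Finset Ω) (v : GameSpace Ω) : ℝ :=
  ∑ S ∈ R.powerset, (-1 : ℝ) ^ (R.card - S.card) * (v : Finset Ω → ℝ) S

lemma mob_empty (v : GameSpace Ω) : mob ∅ v = 0 := by
  simp only [mob, Finset.powerset_empty, Finset.sum_singleton, Finset.card_empty,
    Nat.sub_zero, pow_zero, one_mul]
  exact v.2

lemma mob_add (R : Finset Ω) (a b : GameSpace Ω) :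
    mob R (a + b) = mob R a + mob R b := by
  unfold mob
  rw [← Finset.sum_add_distrib]
  refine Finset.sum_congr rfl fun S _ => ?_
  have : ((a + b : GameSpace Ω) : Finset Ω → ℝ) S
      = (a : Finset Ω → ℝ) S + (b : Finset Ω → ℝ) S := rfl
  rw [this]; ring

lemma mob_smul (R : Finset Ω) (c : ℝ) (a : GameSpace Ω) :
    mob R (c • a) = c * mob R a := by
  unfold mob
  rw [Finset.mul_sum]
  refine Finset.sum_congr rfl fun S _ => ?_
  have : ((c • a : GameSpace Ω) : Finset Ω → ℝ) S = c * (a : Finset Ω → ℝ) S := rfl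
  rw [this]; ring

/-- Möbius inversion: summing coefficients over subsets of `T` recovers `v T`. -/
lemma sum_mob (v : GameSpace Ω) (T : Finset Ω) :
    ∑ R ∈ T.powerset, mob R v = (v : Finset Ω → ℝ) T := by
  unfold mob
  rw [Finset.sum_comm' (t' := T.powerset)
    (s' := fun S => T.powerset.filter (fun R => S ⊆ R)) (by
      intro R S
      simp only [mem_powerset, mem_filter]
      constructor
      · rintro ⟨h1, h2⟩; exact ⟨⟨h1, h2⟩, h2.trans h1⟩
      · rintro ⟨⟨h1, h2⟩, _⟩; exact ⟨h1, h2⟩)]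
  have : ∀ S ∈ T.powerset,
      ∑ R ∈ T.powerset.filter (fun R => S ⊆ R), (-1 : ℝ) ^ (R.card - S.card)
        * (v : Finset Ω → ℝ) S = (if S = T then 1 else 0) * (v : Finset Ω → ℝ) S := by
    intro S hS
    rw [← Finset.sum_mul, inner1 S T (mem_powerset.mp hS)]
  rw [Finset.sum_congr rfl this]
  simp only [ite_mul, one_mul, zero_mul]
  rw [Finset.sum_ite_eq' T.powerset T (fun S => (v : Finset Ω → ℝ) S)]
  simp

lemma mob_unanimity (A : Finset Ω) (hA : A.Nonempty) (R : Finset Ω) :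
    mob R (unanimity A hA) = if R = A then 1 else 0 := by
  unfold mob
  have hcoe : ∀ S, ((unanimity A hA : GameSpace Ω) : Finset Ω → ℝ) S
      = if A ⊆ S then 1 else 0 := fun S => rfl
  simp only [hcoe, mul_ite, mul_one, mul_zero]
  rw [Finset.sum_ite, Finset.sum_const_zero, add_zero]
  by_cases hAR : A ⊆ R
  · exact inner2 A R hAR
  · rw [Finset.filter_false_of_mem, Finset.sum_empty]
    · rw [if_neg (fun h => hAR (by rw [h]))]
    · intro S hS hAS
      exact hAR (hAS.trans (mem_powerset.mp hS))

lemma mob_null (v : GameSpace Ω) (i : Ω) (hnull : IsNullPlayer i v)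
    (R : Finset Ω) (hi : i ∈ R) : mob R v = 0 := by
  unfold mob
  have hR : R = insert i (R.erase i) := (Finset.insert_erase hi).symm
  rw [hR, Finset.sum_powerset_insert (Finset.notMem_erase i R)]
  rw [← Finset.sum_add_distrib]
  refine Finset.sum_eq_zero fun S hS => ?_
  have hiS : i ∉ S := fun h => Finset.notMem_erase i R (mem_powerset.mp hS h)
  have hcard : (insert i S).card = S.card + 1 := Finset.card_insert_of_notMem hiS
  have hv : (v : Finset Ω → ℝ) (insert i S) = (v : Finset Ω → ℝ) S := hnull S
  have hc : (insert i (R.erase i)).card = (R.erase i).card + 1 :=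
    Finset.card_insert_of_notMem (Finset.notMem_erase i R)
  have hle : S.card ≤ (R.erase i).card := Finset.card_le_card (mem_powerset.mp hS)
  rw [hv, hcard, hc]
  have h1 : (R.erase i).card + 1 - S.card = ((R.erase i).card - S.card) + 1 := by omega
  have h2 : (R.erase i).card + 1 - (S.card + 1) = (R.erase i).card - S.card := by omega
  rw [h1, h2, pow_succ]
  ring

lemma mob_perm (g : Equiv.Perm Ω) (v : GameSpace Ω) (R : Finset Ω) :
    mob R (permGame g v) = mob (R.image ⇑g⁻¹) v := by
  unfold mob
  have hcoe : ∀ S, ((permGame g v : GameSpace Ω) : Finset Ω → ℝ) S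
      = (v : Finset Ω → ℝ) (S.image ⇑g⁻¹) := fun S => rfl
  simp only [hcoe]
  refine Finset.sum_nbij' (fun S => S.image ⇑g⁻¹) (fun S => S.image ⇑g) ?_ ?_ ?_ ?_ ?_
  · intro S hS
    exact mem_powerset.mpr (Finset.image_subset_image (mem_powerset.mp hS))
  · intro S hS
    show S.image ⇑g ∈ R.powerset
    rw [mem_powerset] at hS ⊢
    calc S.image ⇑g ⊆ (R.image ⇑g⁻¹).image ⇑g := Finset.image_subset_image hS
    _ = R := image_image_inv g R
  · intro S _
    show (S.image ⇑g⁻¹).image ⇑g = S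
    exact image_image_inv g S
  · intro S _
    show (S.image ⇑g).image ⇑g⁻¹ = S
    exact image_inv_image g S
  · intro S hS
    show _ = (-1 : ℝ) ^ ((R.image ⇑g⁻¹).card - (S.image ⇑g⁻¹).card)
        * (v : Finset Ω → ℝ) (S.image ⇑g⁻¹)
    rw [card_image_perm g⁻¹ R, card_image_perm g⁻¹ S]
end Mob

section PhiOf
variable {Ω : Type*} [Fintype Ω] [DecidableEq Ω]

/-- The game value determined by a payoff scheme `ψ` on coalitions, via the
Möbius (unanimity) expansion. -/
noncomputable def phiOf (ψ : Finset Ω → Ω → ℝ) : GameValue Ω where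
  toFun v i := ∑ R ∈ (Finset.univ : Finset Ω).powerset, mob R v * ψ R i
  map_add' a b := by
    funext i
    simp only [Pi.add_apply]
    rw [← Finset.sum_add_distrib]
    exact Finset.sum_congr rfl fun R _ => by rw [mob_add]; ring
  map_smul' c a := by
    funext i
    simp only [Pi.smul_apply, RingHom.id_apply, smul_eq_mul]
    rw [Finset.mul_sum]
    exact Finset.sum_congr rfl fun R _ => by rw [mob_smul]; ring

lemma phiOf_apply (ψ : Finset Ω → Ω → ℝ) (v : GameSpace Ω) (i : Ω) :
    phiOf ψ v i = ∑ R ∈ (Finset.univ : Finset Ω).powerset, mob R v * ψ R i := rfl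

lemma phiOf_unanimity (ψ : Finset Ω → Ω → ℝ) (A : Finset Ω) (hA : A.Nonempty) (i : Ω) :
    phiOf ψ (unanimity A hA) i = ψ A i := by
  rw [phiOf_apply]
  have : ∀ R ∈ (Finset.univ : Finset Ω).powerset,
      mob R (unanimity A hA) * ψ R i = if R = A then ψ A i else 0 := by
    intro R _
    rw [mob_unanimity]
    split
    · subst ‹R = A›; ring
    · ring
  rw [Finset.sum_congr rfl this, Finset.sum_ite_eq' _ A (fun _ => ψ A i),
    if_pos (mem_powerset.mpr (subset_univ A))]

lemma phiOf_quasi (ψ : Finset Ω → Ω → ℝ)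
    (h0 : ∀ R : Finset Ω, ∀ i, i ∉ R → ψ R i = 0)
    (h1 : ∀ R : Finset Ω, R.Nonempty → ∑ i, ψ R i = 1) :
    IsQuasiValue (phiOf ψ) := by
  constructor
  · intro v i hnull
    rw [phiOf_apply]
    refine Finset.sum_eq_zero fun R _ => ?_
    by_cases hi : i ∈ R
    · rw [mob_null v i hnull R hi, zero_mul]
    · rw [h0 R i hi, mul_zero]
  · intro v
    have : ∀ i : Ω, phiOf ψ v i = ∑ R ∈ (Finset.univ : Finset Ω).powerset,
        mob R v * ψ R i := fun i => rfl
    rw [Finset.sum_congr rfl fun i _ => this i, Finset.sum_comm]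
    have : ∀ R ∈ (Finset.univ : Finset Ω).powerset,
        ∑ i, mob R v * ψ R i = mob R v := by
      intro R _
      rw [← Finset.mul_sum]
      rcases R.eq_empty_or_nonempty with rfl | hR
      · rw [mob_empty, zero_mul]
      · rw [h1 R hR, mul_one]
    rw [Finset.sum_congr rfl this, sum_mob]

lemma phiOf_sym (G : Subgroup (Equiv.Perm Ω)) (ψ : Finset Ω → Ω → ℝ)
    (hsym : ∀ g ∈ G, ∀ (R : Finset Ω) (i : Ω), ψ (R.image ⇑g) i = ψ R (g⁻¹ i)) :
    IsGSym G (phiOf ψ) := by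
  intro g hg v i
  rw [phiOf_apply, phiOf_apply]
  refine Finset.sum_nbij' (fun R => R.image ⇑g⁻¹) (fun R => R.image ⇑g) ?_ ?_ ?_ ?_ ?_
  · intro R _; exact mem_powerset.mpr (subset_univ _)
  · intro R _; exact mem_powerset.mpr (subset_univ _)
  · intro R _
    show (R.image ⇑g⁻¹).image ⇑g = R
    exact image_image_inv g R
  · intro R _
    show (R.image ⇑g).image ⇑g⁻¹ = R
    exact image_inv_image g R
  · intro R _
    show mob R (permGame g v) * ψ R i = mob (R.image ⇑g⁻¹) v * ψ (R.image ⇑g⁻¹) (g⁻¹ i)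
    rw [mob_perm, ← hsym g hg (R.image ⇑g⁻¹) i, image_image_inv g R]

/-- Decomposition of an arbitrary game as a combination of unanimity games. -/
lemma game_decomp (v : GameSpace Ω) :
    v = ∑ R ∈ ((Finset.univ : Finset Ω).powerset.filter Finset.Nonempty).attach,
      mob R.1 v • unanimity R.1 (Finset.mem_filter.mp R.2).2 := by
  apply Subtype.ext
  rw [Submodule.coe_sum]
  funext T
  rw [Finset.sum_apply]
  have step1 : ∀ R ∈ ((Finset.univ : Finset Ω).powerset.filter Finset.Nonempty).attach,
      ((mob R.1 v • unanimity R.1 (Finset.mem_filter.mp R.2).2 : GameSpace Ω)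
        : Finset Ω → ℝ) T = mob R.1 v * (if R.1 ⊆ T then 1 else 0) := by
    intro R _; rfl
  rw [Finset.sum_congr rfl step1]
  rw [Finset.sum_attach (((Finset.univ : Finset Ω).powerset.filter Finset.Nonempty))
    (fun R => mob R v * (if R ⊆ T then 1 else 0))]
  rw [Finset.sum_filter]
  have step2 : ∀ R ∈ (Finset.univ : Finset Ω).powerset,
      (if R.Nonempty then mob R v * (if R ⊆ T then 1 else 0) else 0)
        = if R ⊆ T then mob R v else 0 := by
    intro R _
    rcases R.eq_empty_or_nonempty with rfl | hR
    · simp [mob_empty]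
    · rw [if_pos hR]
      split <;> simp
  rw [Finset.sum_congr rfl step2, ← Finset.sum_filter]
  have : (Finset.univ : Finset Ω).powerset.filter (fun R => R ⊆ T) = T.powerset := by
    ext R
    simp [Finset.mem_powerset, Finset.mem_filter]
  rw [this, sum_mob]
end PhiOf

section Uniqueness
variable {Ω : Type*} [Fintype Ω] [DecidableEq Ω]

lemma permGame_unanimity (g : Equiv.Perm Ω) (R : Finset Ω) (hR : R.Nonempty) :
    permGame g (unanimity R hR) = unanimity (R.image ⇑g) (hR.image ⇑g) := by
  apply Subtype.ext
  funext S
  show (if R ⊆ S.image ⇑g⁻¹ then (1 : ℝ) else 0) = if R.image ⇑g ⊆ S then 1 else 0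
  have h : R ⊆ S.image ⇑g⁻¹ ↔ R.image ⇑g ⊆ S := by
    constructor
    · intro h
      calc R.image ⇑g ⊆ (S.image ⇑g⁻¹).image ⇑g := Finset.image_subset_image h
        _ = S := image_image_inv g S
    · intro h
      calc R = (R.image ⇑g).image ⇑g⁻¹ := (image_inv_image g R).symm
        _ ⊆ S.image ⇑g⁻¹ := Finset.image_subset_image h
  rw [if_congr h rfl rfl]

lemma unanimity_congr {R R' : Finset Ω} (hR : R.Nonempty) (hR' : R'.Nonempty)
    (h : R = R') : unanimity R hR = unanimity R' hR' := by
  subst h; rfl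

lemma value_unanimity (G : Subgroup (Equiv.Perm Ω)) (hG : Supertransitive G)
    (φ : GameValue Ω) (hq : IsQuasiValue φ) (hs : IsGSym G φ)
    (R : Finset Ω) (hR : R.Nonempty) (i : Ω) :
    φ (unanimity R hR) i = if i ∈ R then ((R.card : ℝ))⁻¹ else 0 := by
  have hnull : ∀ j, j ∉ R → φ (unanimity R hR) j = 0 := by
    intro j hj
    apply hq.1
    intro S
    show (if R ⊆ insert j S then (1 : ℝ) else 0) = if R ⊆ S then 1 else 0
    have h : (R ⊆ insert j S) ↔ R ⊆ S := by
      constructor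
      · intro h x hx
        rcases Finset.mem_insert.mp (h hx) with rfl | hxS
        · exact absurd hx hj
        · exact hxS
      · intro h; exact h.trans (Finset.subset_insert _ _)
    rw [if_congr h rfl rfl]
  have hconst : ∀ j ∈ R, ∀ k ∈ R, φ (unanimity R hR) j = φ (unanimity R hR) k := by
    intro j hj k hk
    obtain ⟨g, hgG, hgR, hgjk⟩ := hG R j hj k hk
    have h1 := hs g hgG (unanimity R hR) k
    rw [permGame_unanimity,
      unanimity_congr (hR.image ⇑g) hR hgR] at h1
    have h2 : g⁻¹ k = j := by rw [← hgjk]; simp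
    rw [h2] at h1
    exact h1.symm
  by_cases hi : i ∈ R
  · have hsum : ∑ x, φ (unanimity R hR) x = (R.card : ℝ) * φ (unanimity R hR) i := by
      rw [← Finset.sum_subset (Finset.subset_univ R) (fun x _ hx => hnull x hx)]
      rw [Finset.sum_congr rfl (fun x hx => hconst x hx i hi), Finset.sum_const,
        nsmul_eq_mul]
    have heff := hq.2 (unanimity R hR)
    have hval : ((unanimity R hR : GameSpace Ω) : Finset Ω → ℝ) Finset.univ = 1 := by
      show (if R ⊆ Finset.univ then (1 : ℝ) else 0) = 1
      rw [if_pos (Finset.subset_univ R)]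
    rw [hval, hsum] at heff
    rw [if_pos hi]
    have hcard : ((R.card : ℝ)) ≠ 0 := by
      simp only [ne_eq, Nat.cast_eq_zero, Finset.card_eq_zero]
      exact hR.ne_empty
    exact mul_left_cancel₀ hcard (heff.trans (mul_inv_cancel₀ hcard).symm)
  · rw [if_neg hi]
    exact hnull i hi

lemma quasi_eq (G : Subgroup (Equiv.Perm Ω)) (hG : Supertransitive G)
    (φ φ' : GameValue Ω) (hq : IsQuasiValue φ) (hs : IsGSym G φ)
    (hq' : IsQuasiValue φ') (hs' : IsGSym G φ') : φ = φ' := by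
  apply LinearMap.ext
  intro v
  rw [game_decomp v, map_sum, map_sum]
  refine Finset.sum_congr rfl fun R _ => ?_
  rw [map_smul, map_smul]
  congr 1
  funext i
  rw [value_unanimity G hG φ hq hs _ _ i, value_unanimity G hG φ' hq' hs' _ _ i]
end Uniqueness

section ShapleyProps
variable {Ω : Type*} [Fintype Ω] [DecidableEq Ω]

/-- The Shapley weight. -/
noncomputable def shw (n k : ℕ) : ℝ :=
  (k.factorial * (n - k - 1).factorial : ℝ) / n.factorial

lemma shapley_apply (v : GameSpace Ω) (i : Ω) :
    shapley Ω v i = ∑ R ∈ ((Finset.univ : Finset Ω).erase i).powerset,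
      shw (Fintype.card Ω) R.card *
        ((v : Finset Ω → ℝ) (insert i R) - (v : Finset Ω → ℝ) R) := rfl

lemma shapley_null (v : GameSpace Ω) (i : Ω) (h : IsNullPlayer i v) :
    shapley Ω v i = 0 := by
  rw [shapley_apply]
  refine Finset.sum_eq_zero fun R _ => ?_
  rw [h R, sub_self, mul_zero]

lemma shapley_sym (g : Equiv.Perm Ω) (v : GameSpace Ω) (i : Ω) :
    shapley Ω (permGame g v) i = shapley Ω v (g⁻¹ i) := by
  rw [shapley_apply, shapley_apply]
  refine Finset.sum_nbij' (fun R => R.image ⇑g⁻¹) (fun R => R.image ⇑g) ?_ ?_ ?_ ?_ ?_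
  · intro R hR
    rw [mem_powerset] at hR ⊢
    intro x hx
    rcases Finset.mem_image.mp hx with ⟨y, hy, rfl⟩
    have hy' := hR hy
    rw [Finset.mem_erase] at hy' ⊢
    refine ⟨fun h => hy'.1 ?_, Finset.mem_univ _⟩
    have := congrArg (⇑g) h
    simpa using this
  · intro R hR
    rw [mem_powerset] at hR ⊢
    intro x hx
    rcases Finset.mem_image.mp hx with ⟨y, hy, rfl⟩
    have hy' := hR hy
    rw [Finset.mem_erase] at hy' ⊢
    refine ⟨fun h => hy'.1 ?_, Finset.mem_univ _⟩
    rw [← h]; simp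
  · intro R _
    show (R.image ⇑g⁻¹).image ⇑g = R
    exact image_image_inv g R
  · intro R _
    show (R.image ⇑g).image ⇑g⁻¹ = R
    exact image_inv_image g R
  · intro R _
    show shw (Fintype.card Ω) R.card *
        ((v : Finset Ω → ℝ) ((insert i R).image ⇑g⁻¹) - (v : Finset Ω → ℝ) (R.image ⇑g⁻¹))
      = shw (Fintype.card Ω) (R.image ⇑g⁻¹).card *
        ((v : Finset Ω → ℝ) (insert (g⁻¹ i) (R.image ⇑g⁻¹))
          - (v : Finset Ω → ℝ) (R.image ⇑g⁻¹))
    rw [card_image_perm g⁻¹ R, Finset.image_insert]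

lemma shapley_eff (v : GameSpace Ω) :
    ∑ i, shapley Ω v i = (v : Finset Ω → ℝ) Finset.univ := by
  rcases isEmpty_or_nonempty Ω with hΩ | hΩ
  · rw [Finset.univ_eq_empty, Finset.sum_empty]
    exact v.2.symm
  set n := Fintype.card Ω with hn
  have hn0 : 0 < n := Fintype.card_pos
  have hnf : ((n.factorial : ℝ)) ≠ 0 := Nat.cast_ne_zero.mpr n.factorial_ne_zero
  have key : ∀ i : Ω, shapley Ω v i
      = (∑ R ∈ ((Finset.univ : Finset Ω).erase i).powerset,
          shw n R.card * (v : Finset Ω → ℝ) (insert i R))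
        - ∑ R ∈ ((Finset.univ : Finset Ω).erase i).powerset,
          shw n R.card * (v : Finset Ω → ℝ) R := by
    intro i
    rw [shapley_apply, ← Finset.sum_sub_distrib]
    exact Finset.sum_congr rfl fun R _ => by ring
  rw [Finset.sum_congr rfl fun i _ => key i, Finset.sum_sub_distrib]
  have hsum1 : ∑ i : Ω, ∑ R ∈ ((Finset.univ : Finset Ω).erase i).powerset,
        shw n R.card * (v : Finset Ω → ℝ) (insert i R)
      = ∑ T ∈ (Finset.univ : Finset Ω).powerset.filter Finset.Nonempty,
          (T.card : ℝ) * (shw n (T.card - 1) * (v : Finset Ω → ℝ) T) := by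
    rw [Finset.sum_sigma']
    have e1 : ∀ T ∈ (Finset.univ : Finset Ω).powerset.filter Finset.Nonempty,
        (T.card : ℝ) * (shw n (T.card - 1) * (v : Finset Ω → ℝ) T)
          = ∑ _j ∈ T, shw n (T.card - 1) * (v : Finset Ω → ℝ) T := by
      intro T _
      rw [Finset.sum_const, nsmul_eq_mul]
    rw [Finset.sum_congr rfl e1, Finset.sum_sigma']
    refine Finset.sum_nbij' (fun p => ⟨insert p.1 p.2, p.1⟩)
      (fun q => ⟨q.2, q.1.erase q.2⟩) ?_ ?_ ?_ ?_ ?_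
    · rintro ⟨i, R⟩ hp
      rw [Finset.mem_sigma, mem_powerset] at hp
      rw [Finset.mem_sigma]
      refine ⟨Finset.mem_filter.mpr ⟨mem_powerset.mpr (Finset.subset_univ _),
        Finset.insert_nonempty _ _⟩, Finset.mem_insert_self _ _⟩
    · rintro ⟨T, j⟩ hq
      rw [Finset.mem_sigma] at hq
      rw [Finset.mem_sigma, mem_powerset]
      exact ⟨Finset.mem_univ _, Finset.erase_subset_erase _ (Finset.subset_univ T)⟩
    · rintro ⟨i, R⟩ hp
      rw [Finset.mem_sigma, mem_powerset] at hp
      have hiR : i ∉ R := fun h => (Finset.mem_erase.mp (hp.2 h)).1 rfl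
      simp [Finset.erase_insert hiR]
    · rintro ⟨T, j⟩ hq
      rw [Finset.mem_sigma] at hq
      simp [Finset.insert_erase hq.2]
    · rintro ⟨i, R⟩ hp
      rw [Finset.mem_sigma, mem_powerset] at hp
      have hiR : i ∉ R := fun h => (Finset.mem_erase.mp (hp.2 h)).1 rfl
      show shw n R.card * (v : Finset Ω → ℝ) (insert i R)
        = shw n ((insert i R).card - 1) * (v : Finset Ω → ℝ) (insert i R)
      rw [Finset.card_insert_of_notMem hiR, Nat.add_sub_cancel]
  have hsum2 : ∑ i : Ω, ∑ R ∈ ((Finset.univ : Finset Ω).erase i).powerset,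
        shw n R.card * (v : Finset Ω → ℝ) R
      = ∑ R ∈ (Finset.univ : Finset Ω).powerset,
          ((n - R.card : ℕ) : ℝ) * (shw n R.card * (v : Finset Ω → ℝ) R) := by
    rw [Finset.sum_comm' (t' := (Finset.univ : Finset Ω).powerset)
      (s' := fun R => Finset.univ \ R) (by
        intro i R
        simp only [Finset.mem_univ, true_and, mem_powerset, Finset.mem_sdiff,
          Finset.subset_erase]
        constructor
        · rintro ⟨h1, h2⟩; exact ⟨h2, h1⟩
        · rintro ⟨h1, h2⟩; exact ⟨h2, h1⟩)]
    refine Finset.sum_congr rfl fun R _ => ?_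
    rw [Finset.sum_const, nsmul_eq_mul, Finset.card_univ_diff]
  rw [hsum1, hsum2]
  rw [← Finset.sum_filter_add_sum_filter_not ((Finset.univ : Finset Ω).powerset)
    Finset.Nonempty (fun R => ((n - R.card : ℕ) : ℝ) * (shw n R.card * (v : Finset Ω → ℝ) R))]
  have hempty : (Finset.univ : Finset Ω).powerset.filter (fun R => ¬ R.Nonempty) = {∅} := by
    ext R
    simp [Finset.not_nonempty_iff_eq_empty]
  rw [hempty, Finset.sum_singleton, v.2, mul_zero, mul_zero, add_zero,
    ← Finset.sum_sub_distrib]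
  have main : ∀ T ∈ (Finset.univ : Finset Ω).powerset.filter Finset.Nonempty,
      (T.card : ℝ) * (shw n (T.card - 1) * (v : Finset Ω → ℝ) T)
        - ((n - T.card : ℕ) : ℝ) * (shw n T.card * (v : Finset Ω → ℝ) T)
      = (if T = Finset.univ then 1 else 0) * (v : Finset Ω → ℝ) T := by
    intro T hT
    rw [Finset.mem_filter, mem_powerset] at hT
    set t := T.card with htdef
    have h1 : 1 ≤ t := Finset.card_pos.mpr hT.2
    have h2 : t ≤ n := by
      rw [htdef, hn]
      exact Finset.card_le_univ T
    by_cases hTu : T = Finset.univ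
    · have ht : t = n := by rw [htdef, hTu, hn, Finset.card_univ]
      rw [if_pos hTu]
      have hfact : (n : ℝ) * (n - 1).factorial = n.factorial := by
        exact_mod_cast Nat.mul_factorial_pred hn0.ne'
      rw [ht]
      unfold shw
      rw [show n - (n - 1) - 1 = 0 from by omega, show n - n = 0 from by omega]
      simp only [Nat.cast_zero, Nat.factorial_zero, Nat.cast_one, mul_one, zero_mul]
      field_simp
      linear_combination (v : Finset Ω → ℝ) T * hfact
    · have ht : t < n := by
        rw [htdef, hn]
        exact Finset.card_lt_card (Finset.ssubset_univ_iff.mpr hTu)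
      rw [if_neg hTu]
      have hA : (t : ℝ) * (t - 1).factorial = t.factorial := by
        exact_mod_cast Nat.mul_factorial_pred (by omega)
      have hB : ((n - t : ℕ) : ℝ) * (n - t - 1).factorial = (n - t).factorial := by
        exact_mod_cast Nat.mul_factorial_pred (by omega)
      have hcoef : (t : ℝ) * shw n (t - 1) = ((n - t : ℕ) : ℝ) * shw n t := by
        unfold shw
        rw [show n - (t - 1) - 1 = n - t from by omega]
        rw [← mul_div_assoc, ← mul_div_assoc, div_eq_div_iff hnf hnf, ← hA, ← hB]
        ring
      linear_combination ((v : Finset Ω → ℝ) T) * hcoef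
  rw [Finset.sum_congr rfl main]
  simp only [ite_mul, one_mul, zero_mul]
  rw [Finset.sum_ite_eq' _ Finset.univ (fun T => (v : Finset Ω → ℝ) T)]
  rw [if_pos (Finset.mem_filter.mpr ⟨mem_powerset.mpr le_rfl, Finset.univ_nonempty⟩)]

lemma shapley_quasi : IsQuasiValue (shapley Ω) :=
  ⟨fun v i h => shapley_null v i h, shapley_eff⟩

lemma shapley_gsym (G : Subgroup (Equiv.Perm Ω)) : IsGSym G (shapley Ω) :=
  fun g _ v i => shapley_sym g v i
end ShapleyProps

section FinalHelpers
variable {Ω : Type*} [Fintype Ω] [DecidableEq Ω]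

lemma permImage_mul (g h : Equiv.Perm Ω) (s : Finset Ω) :
    s.image ⇑(g * h) = (s.image ⇑h).image ⇑g := by
  rw [Finset.image_image]
  rfl

lemma image_one (s : Finset Ω) : s.image ⇑(1 : Equiv.Perm Ω) = s := by
  rw [show ⇑(1 : Equiv.Perm Ω) = id from rfl, Finset.image_id]

lemma mem_image_perm {g : Equiv.Perm Ω} {s : Finset Ω} {x : Ω} :
    x ∈ s.image ⇑g ↔ g⁻¹ x ∈ s := by
  constructor
  · intro hx
    rcases Finset.mem_image.mp hx with ⟨y, hy, rfl⟩
    simpa using hy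
  · intro hx
    refine Finset.mem_image.mpr ⟨g⁻¹ x, hx, ?_⟩
    simp

/-- The fully symmetric payoff scheme. -/
lemma psi2_props (G : Subgroup (Equiv.Perm Ω)) :
    (∀ R : Finset Ω, ∀ x, x ∉ R → (if x ∈ R then ((R.card : ℝ))⁻¹ else 0) = 0) ∧
    (∀ R : Finset Ω, R.Nonempty →
      ∑ x, (if x ∈ R then ((R.card : ℝ))⁻¹ else 0) = 1) ∧
    (∀ g ∈ G, ∀ (R : Finset Ω) (x : Ω),
      (if x ∈ R.image ⇑g then (((R.image ⇑g).card : ℝ))⁻¹ else 0)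
        = (if g⁻¹ x ∈ R then ((R.card : ℝ))⁻¹ else 0)) := by
  refine ⟨fun R x hx => if_neg hx, ?_, ?_⟩
  · intro R hR
    rw [Finset.sum_ite_mem, Finset.univ_inter, Finset.sum_const, nsmul_eq_mul]
    exact mul_inv_cancel₀ (by
      simp only [ne_eq, Nat.cast_eq_zero, Finset.card_eq_zero]
      exact hR.ne_empty)
  · intro g _ R x
    rw [card_image_perm, if_congr mem_image_perm rfl rfl]
end FinalHelpers

/-- there exists a unique `G`-symmetric quasi-value (namely the
Shapley value) if and only if `G` acts supertransitively on `Ω`. -/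
theorem stmt6 {Ω : Type*} [Fintype Ω] [DecidableEq Ω] (G : Subgroup (Equiv.Perm Ω)) :
    ({φ : GameValue Ω | IsQuasiValue φ ∧ IsGSym G φ} = {shapley Ω}) ↔
      Supertransitive G := by
  constructor
  · intro hset A i hi j hj
    by_contra hcon
    push_neg at hcon
    classical
    have hA : A.Nonempty := ⟨i, hi⟩
    set ψ2 : Finset Ω → Ω → ℝ := fun R x => if x ∈ R then ((R.card : ℝ))⁻¹ else 0
      with hψ2
    obtain ⟨h20, h21, h2G⟩ := psi2_props (Ω := Ω) G
    set O : Finset Ω :=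
      Finset.univ.filter (fun x => ∃ g ∈ G, A.image ⇑g = A ∧ g i = x) with hO
    have hiO : i ∈ O := by
      rw [hO, Finset.mem_filter]
      exact ⟨Finset.mem_univ _, 1, G.one_mem, image_one A, rfl⟩
    have hjO : j ∉ O := by
      rw [hO, Finset.mem_filter]
      rintro ⟨-, g, hgG, hgA, hgij⟩
      exact hcon g hgG hgA hgij
    have hOcard : ((O.card : ℝ)) ≠ 0 := by
      simp only [ne_eq, Nat.cast_eq_zero, Finset.card_eq_zero]
      exact Finset.nonempty_iff_ne_empty.mp ⟨i, hiO⟩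
    set ψ1 : Finset Ω → Ω → ℝ := fun R x =>
      if ∃ g ∈ G, A.image ⇑g = R then
        (if ∃ g ∈ G, A.image ⇑g = R ∧ g i = x then ((O.card : ℝ))⁻¹ else 0)
      else ψ2 R x with hψ1
    have transfer : ∀ g ∈ G, ∀ R : Finset Ω,
        (∃ h ∈ G, A.image ⇑h = R.image ⇑g) ↔ (∃ h ∈ G, A.image ⇑h = R) := by
      intro g hg R
      constructor
      · rintro ⟨h, hhG, hh⟩
        refine ⟨g⁻¹ * h, G.mul_mem (G.inv_mem hg) hhG, ?_⟩
        rw [permImage_mul, hh, image_inv_image]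
      · rintro ⟨h, hhG, hh⟩
        refine ⟨g * h, G.mul_mem hg hhG, ?_⟩
        rw [permImage_mul, hh]
    have transfer2 : ∀ g ∈ G, ∀ (R : Finset Ω) (x : Ω),
        (∃ h ∈ G, A.image ⇑h = R.image ⇑g ∧ h i = x)
          ↔ (∃ h ∈ G, A.image ⇑h = R ∧ h i = g⁻¹ x) := by
      intro g hg R x
      constructor
      · rintro ⟨h, hhG, hh, hhx⟩
        refine ⟨g⁻¹ * h, G.mul_mem (G.inv_mem hg) hhG, ?_, ?_⟩
        · rw [permImage_mul, hh, image_inv_image]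
        · show g⁻¹ (h i) = g⁻¹ x
          rw [hhx]
      · rintro ⟨h, hhG, hh, hhx⟩
        refine ⟨g * h, G.mul_mem hg hhG, ?_, ?_⟩
        · rw [permImage_mul, hh]
        · show g (h i) = x
          rw [hhx]; simp
    have h10 : ∀ R : Finset Ω, ∀ x, x ∉ R → ψ1 R x = 0 := by
      intro R x hx
      simp only [hψ1]
      split
      · rw [if_neg]
        rintro ⟨g, hgG, hgR, hgx⟩
        have hgi : g⁻¹ x ∈ A := by rw [← hgx]; simpa using hi
        exact hx (by rw [← hgR]; exact mem_image_perm.mpr hgi)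
      · exact h20 R x hx
    have h11 : ∀ R : Finset Ω, R.Nonempty → ∑ x, ψ1 R x = 1 := by
      intro R hR
      by_cases horb : ∃ g ∈ G, A.image ⇑g = R
      · obtain ⟨g₀, hg₀G, hg₀⟩ := horb
        have hstep : ∀ x : Ω, ψ1 R x
            = if ∃ h ∈ G, A.image ⇑h = R ∧ h i = x then ((O.card : ℝ))⁻¹ else 0 := by
          intro x
          simp only [hψ1]
          rw [if_pos ⟨g₀, hg₀G, hg₀⟩]
        rw [Finset.sum_congr rfl fun x _ => hstep x,
          ← Finset.sum_filter (fun x => ∃ h ∈ G, A.image ⇑h = R ∧ h i = x)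
            (fun _ => ((O.card : ℝ))⁻¹)]
        have hfil : Finset.univ.filter (fun x => ∃ h ∈ G, A.image ⇑h = R ∧ h i = x)
            = O.image ⇑g₀ := by
          ext x
          rw [Finset.mem_filter]
          constructor
          · rintro ⟨-, h, hhG, hhR, hhx⟩
            refine Finset.mem_image.mpr ⟨g₀⁻¹ x, ?_, by simp⟩
            rw [hO, Finset.mem_filter]
            refine ⟨Finset.mem_univ _, g₀⁻¹ * h, G.mul_mem (G.inv_mem hg₀G) hhG, ?_, ?_⟩
            · rw [permImage_mul, hhR, ← hg₀, image_inv_image]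
            · show g₀⁻¹ (h i) = g₀⁻¹ x
              rw [hhx]
          · intro hx
            rcases Finset.mem_image.mp hx with ⟨y, hy, rfl⟩
            rw [hO, Finset.mem_filter] at hy
            obtain ⟨-, h, hhG, hhA, hhy⟩ := hy
            refine ⟨Finset.mem_univ _, g₀ * h, G.mul_mem hg₀G hhG, ?_, ?_⟩
            · rw [permImage_mul, hhA, hg₀]
            · show g₀ (h i) = g₀ y
              rw [hhy]
        rw [hfil, Finset.sum_const, card_image_perm, nsmul_eq_mul,
          mul_inv_cancel₀ hOcard]
      · have hstep : ∀ x : Ω, ψ1 R x = ψ2 R x := by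
          intro x
          simp only [hψ1]
          rw [if_neg horb]
        rw [Finset.sum_congr rfl fun x _ => hstep x]
        exact h21 R hR
    have h1G : ∀ g ∈ G, ∀ (R : Finset Ω) (x : Ω), ψ1 (R.image ⇑g) x = ψ1 R (g⁻¹ x) := by
      intro g hg R x
      simp only [hψ1]
      by_cases horb : ∃ h ∈ G, A.image ⇑h = R
      · rw [if_pos ((transfer g hg R).mpr horb), if_pos horb,
          if_congr (transfer2 g hg R x) rfl rfl]
      · rw [if_neg (fun h => horb ((transfer g hg R).mp h)), if_neg horb]
        exact h2G g hg R x
    have hq1 : IsQuasiValue (phiOf ψ1) := phiOf_quasi ψ1 h10 h11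
    have hs1 : IsGSym G (phiOf ψ1) := phiOf_sym G ψ1 h1G
    have hq2 : IsQuasiValue (phiOf ψ2) := phiOf_quasi ψ2 h20 h21
    have hs2 : IsGSym G (phiOf ψ2) := phiOf_sym G ψ2 h2G
    have e1 : phiOf ψ1 ∈ {φ : GameValue Ω | IsQuasiValue φ ∧ IsGSym G φ} := ⟨hq1, hs1⟩
    have e2 : phiOf ψ2 ∈ {φ : GameValue Ω | IsQuasiValue φ ∧ IsGSym G φ} := ⟨hq2, hs2⟩
    rw [hset, Set.mem_singleton_iff] at e1 e2
    have e3 : phiOf ψ1 (unanimity A hA) j = phiOf ψ2 (unanimity A hA) j := by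
      rw [e1, e2]
    rw [phiOf_unanimity, phiOf_unanimity] at e3
    have hv1 : ψ1 A j = 0 := by
      simp only [hψ1]
      rw [if_pos ⟨1, G.one_mem, image_one A⟩, if_neg]
      rintro ⟨g, hgG, hgA, hgij⟩
      exact hcon g hgG hgA hgij
    have hv2 : ψ2 A j = ((A.card : ℝ))⁻¹ := by
      simp only [hψ2]
      rw [if_pos hj]
    rw [hv1, hv2] at e3
    have hAcard : ((A.card : ℝ)) ≠ 0 := by
      simp only [ne_eq, Nat.cast_eq_zero, Finset.card_eq_zero]
      exact hA.ne_empty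
    exact hAcard (by rwa [eq_comm, inv_eq_zero] at e3)
  · intro hG
    ext φ
    simp only [Set.mem_setOf_eq, Set.mem_singleton_iff]
    constructor
    · rintro ⟨hq, hs⟩
      exact quasi_eq G hG φ (shapley Ω) hq hs shapley_quasi (shapley_gsym G)
    · rintro rfl
      exact ⟨shapley_quasi, shapley_gsym G⟩
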